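/- Let S be a set equipped with a strict partial order <, and say two elements commute if they are comparable. In the free monoid on S modulo commutation of comparable adjacent elements, call a word s₁⋯sₙ in normal form if for all i < n it is not the case that sᵢ > sᵢ₊₁. Then every word is equivalent (via finitely many swaps of adjacent comparable letters) to a unique word in normal form. -/

import Mathlib

namespace SPO

variable {S : Type*}

/-- Swap two adjacent comparable letters. -/
def Swap (lt : S → S → Prop) (u v : List S) : Prop :=
  ∃ (x y : List S) (s t : S),
    (lt s t ∨ lt t s) ∧ u = x ++ s :: t :: y ∧ v = x ++ t :: s :: y

/-- Two words are equivalent if related by finitely many swaps of adjacent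
comparable letters. -/
def Equiv (lt : S → S → Prop) : List S → List S → Prop :=
  Relation.ReflTransGen (Swap lt)

/-- A word is in normal form if no adjacent pair satisfies `sᵢ > sᵢ₊₁`. -/
def NormalForm (lt : S → S → Prop) (w : List S) : Prop :=
  List.Chain' (fun a b => ¬ lt b a) w

end SPO

namespace NFProof

open SPO Relation

variable {S : Type*} {lt : S → S → Prop}

/-- Oriented reduction: swap an adjacent inversion. -/
inductive Red (lt : S → S → Prop) : List S → List S → Prop
  | head {s t : S} {y : List S} : lt t s → Red lt (s :: t :: y) (t :: s :: y)
  | cons {a : S} {u v : List S} : Red lt u v → Red lt (a :: u) (a :: v)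

theorem red_append {x : List S} {s t : S} {y : List S} (h : lt t s) :
    Red lt (x ++ s :: t :: y) (x ++ t :: s :: y) := by
  induction x with
  | nil => exact Red.head h
  | cons a x ih => exact Red.cons ih

theorem red_of_swap {u v : List S} (h : Swap lt u v) : Red lt u v ∨ Red lt v u := by
  obtain ⟨x, y, s, t, hc, hu, hv⟩ := h
  subst hu; subst hv
  rcases hc with h | h
  · exact Or.inr (red_append h)
  · exact Or.inl (red_append h)

theorem swap_of_red {u v : List S} (h : Red lt u v) : Swap lt u v := by
  induction h with
  | @head s t y h => exact ⟨[], y, s, t, Or.inr h, rfl, rfl⟩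
  | @cons a u v _ ih =>
      obtain ⟨x, y, s, t, hc, hu, hv⟩ := ih
      exact ⟨a :: x, y, s, t, hc, by simp [hu], by simp [hv]⟩

theorem perm_of_red {u v : List S} (h : Red lt u v) : u.Perm v := by
  induction h with
  | head _ => exact List.Perm.swap _ _ _
  | cons _ ih => exact ih.cons _

open scoped Classical in
/-- Number of inversions. -/
noncomputable def inv (lt : S → S → Prop) : List S → ℕ
  | [] => 0
  | a :: l => l.countP (fun b => decide (lt b a)) + inv lt l

theorem inv_lt_of_red (hir : ∀ a, ¬ lt a a) (htr : Transitive lt)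
    {u v : List S} (h : Red lt u v) : inv lt v < inv lt u := by
  classical
  induction h with
  | @head s t y h =>
      have hst : ¬ lt s t := fun h' => hir s (htr h' h)
      simp only [inv, List.countP_cons]
      simp [h, hst]
      omega
  | @cons a u v h ih =>
      have hc : u.countP (fun b => decide (lt b a)) = v.countP (fun b => decide (lt b a)) :=
        (perm_of_red h).countP_eq _
      simp only [inv]
      omega

theorem rtg_cons {a : S} {u v : List S} (h : ReflTransGen (Red lt) u v) :
    ReflTransGen (Red lt) (a :: u) (a :: v) :=
  ReflTransGen.lift (a :: ·) (fun _ _ h => Red.cons h) _ _ h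

/-- Local confluence, head vs anything. -/
theorem red_head_confl (htr : Transitive lt) {s t : S} {y : List S} (h : lt t s)
    {w : List S} (h2 : Red lt (s :: t :: y) w) :
    ∃ z, ReflTransGen (Red lt) (t :: s :: y) z ∧ ReflTransGen (Red lt) w z := by
  cases h2 with
  | head h' => exact ⟨t :: s :: y, ReflTransGen.refl, ReflTransGen.refl⟩
  | cons h2 =>
      rename_i w'
      cases h2 with
      | @head _ c y' hc =>
          -- y = c :: y', lt c t, w = s :: c :: t :: y'
          have hcs : lt c s := htr hc h
          refine ⟨c :: t :: s :: y', ?_, ?_⟩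
          · -- t :: s :: c :: y' → t :: c :: s :: y' → c :: t :: s :: y'
            exact (ReflTransGen.single (Red.cons (Red.head hcs))).tail (Red.head hc)
          · -- s :: c :: t :: y' → c :: s :: t :: y' → c :: t :: s :: y'
            exact (ReflTransGen.single (Red.head hcs)).tail (Red.cons (Red.head h))
      | @cons _ _ v₀ h0 =>
          -- w = s :: t :: v₀ with Red y v₀
          exact ⟨t :: s :: v₀, rtg_cons (rtg_cons (ReflTransGen.single h0)),
            ReflTransGen.single (Red.head h)⟩

theorem red_local_confl (htr : Transitive lt) {u v w : List S}
    (h1 : Red lt u v) (h2 : Red lt u w) :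
    ∃ z, ReflTransGen (Red lt) v z ∧ ReflTransGen (Red lt) w z := by
  induction h1 generalizing w with
  | head h => exact red_head_confl htr h h2
  | @cons a u₁ v₁ h1 ih =>
      cases h2 with
      | head h' =>
          obtain ⟨z, hz1, hz2⟩ := red_head_confl htr h' (Red.cons h1)
          exact ⟨z, hz2, hz1⟩
      | cons h2 =>
          obtain ⟨z, hz1, hz2⟩ := ih h2
          exact ⟨a :: z, rtg_cons hz1, rtg_cons hz2⟩

/-- Confluence (Newman), by strong induction on inversion count. -/
theorem red_confl (hir : ∀ a, ¬ lt a a) (htr : Transitive lt) :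
    ∀ n (u v w : List S), inv lt u ≤ n →
      ReflTransGen (Red lt) u v → ReflTransGen (Red lt) u w →
      ∃ z, ReflTransGen (Red lt) v z ∧ ReflTransGen (Red lt) w z := by
  intro n
  induction n with
  | zero =>
      intro u v w hn h1 h2
      have hnf : ∀ x, ¬ Red lt u x := fun x hx =>
        Nat.not_lt_zero _ (lt_of_lt_of_le (inv_lt_of_red hir htr hx) hn)
      have hv : v = u := by
        rcases h1.cases_head with h | ⟨x, hx, _⟩
        · exact h.symm
        · exact absurd hx (hnf x)
      have hw : w = u := by
        rcases h2.cases_head with h | ⟨x, hx, _⟩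
        · exact h.symm
        · exact absurd hx (hnf x)
      exact ⟨u, hv ▸ ReflTransGen.refl, hw ▸ ReflTransGen.refl⟩
  | succ n ih =>
      intro u v w hn h1 h2
      rcases h1.cases_head with h | ⟨v₁, hv₁, hv₁v⟩
      · exact ⟨w, h ▸ h2, ReflTransGen.refl⟩
      rcases h2.cases_head with h | ⟨w₁, hw₁, hw₁w⟩
      · exact ⟨v, ReflTransGen.refl, h ▸ h1⟩
      obtain ⟨d, hd1, hd2⟩ := red_local_confl htr hv₁ hw₁
      have hv₁n : inv lt v₁ ≤ n := by
        have := inv_lt_of_red hir htr hv₁; omega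
      have hw₁n : inv lt w₁ ≤ n := by
        have := inv_lt_of_red hir htr hw₁; omega
      obtain ⟨e, he1, he2⟩ := ih v₁ v d hv₁n hv₁v hd1
      obtain ⟨z, hz1, hz2⟩ := ih w₁ w e hw₁n hw₁w (hd2.trans he2)
      exact ⟨z, he1.trans hz2, hz1⟩

theorem not_normal_of_red {u v : List S} (h : Red lt u v) : ¬ NormalForm lt u := by
  induction h with
  | head h =>
      intro hn
      exact (List.isChain_cons_cons.mp hn).1 h
  | cons _ ih =>
      intro hn
      exact ih hn.tail

theorem exists_red_of_not_normal {u : List S} (h : ¬ NormalForm lt u) :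
    ∃ v, Red lt u v := by
  induction u with
  | nil => exact absurd List.isChain_nil h
  | cons a l ih =>
      cases l with
      | nil => exact absurd (List.isChain_singleton a) h
      | cons b m =>
          by_cases hab : lt b a
          · exact ⟨b :: a :: m, Red.head hab⟩
          · have : ¬ NormalForm lt (b :: m) := fun hn => h (List.isChain_cons_cons.mpr ⟨hab, hn⟩)
            obtain ⟨v, hv⟩ := ih this
            exact ⟨a :: v, Red.cons hv⟩

theorem exists_nf (hir : ∀ a, ¬ lt a a) (htr : Transitive lt) :
    ∀ n (u : List S), inv lt u ≤ n →
      ∃ v, ReflTransGen (Red lt) u v ∧ NormalForm lt v := by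
  intro n
  induction n with
  | zero =>
      intro u hn
      refine ⟨u, ReflTransGen.refl, ?_⟩
      by_contra h
      obtain ⟨v, hv⟩ := exists_red_of_not_normal h
      exact Nat.not_lt_zero _ (lt_of_lt_of_le (inv_lt_of_red hir htr hv) hn)
  | succ n ih =>
      intro u hn
      by_cases h : NormalForm lt u
      · exact ⟨u, ReflTransGen.refl, h⟩
      obtain ⟨u₁, hu₁⟩ := exists_red_of_not_normal h
      have : inv lt u₁ ≤ n := by
        have := inv_lt_of_red hir htr hu₁; omega
      obtain ⟨v, hv1, hv2⟩ := ih u₁ this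
      exact ⟨v, ReflTransGen.head hu₁ hv1, hv2⟩

/-- Equivalent words are joinable. -/
theorem join_of_equiv (hir : ∀ a, ¬ lt a a) (htr : Transitive lt)
    {u v : List S} (h : Equiv lt u v) :
    ∃ z, ReflTransGen (Red lt) u z ∧ ReflTransGen (Red lt) v z := by
  induction h with
  | refl => exact ⟨u, ReflTransGen.refl, ReflTransGen.refl⟩
  | @tail w v hw hswap ih =>
      obtain ⟨z, hz1, hz2⟩ := ih
      rcases red_of_swap hswap with h | h
      · obtain ⟨z', hz'1, hz'2⟩ :=
          red_confl hir htr (inv lt w) w z v le_rfl hz2 (ReflTransGen.single h)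
        exact ⟨z', hz1.trans hz'1, hz'2⟩
      · exact ⟨z, hz1, ReflTransGen.head h hz2⟩

theorem nf_stop {v z : List S} (hnf : NormalForm lt v)
    (h : ReflTransGen (Red lt) v z) : z = v := by
  rcases h.cases_head with h | ⟨x, hx, _⟩
  · exact h.symm
  · exact absurd hnf (not_normal_of_red hx)

theorem swap_symm {u v : List S} (h : Swap lt u v) : Swap lt v u := by
  obtain ⟨x, y, s, t, hc, hu, hv⟩ := h
  exact ⟨x, y, t, s, hc.symm, hv, hu⟩

theorem equiv_symm {u v : List S} (h : Equiv lt u v) : Equiv lt v u := by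
  induction h with
  | refl => exact ReflTransGen.refl
  | tail _ hswap ih => exact ReflTransGen.head (swap_symm hswap) ih

end NFProof

open SPO in
/-- Every word is equivalent to a unique word in normal form. -/
theorem exists_unique_normal_form {S : Type*} (lt : S → S → Prop)
    [IsStrictOrder S lt] (u : List S) :
    ∃ v : List S, (Equiv lt u v ∧ NormalForm lt v) ∧
      ∀ v' : List S, Equiv lt u v' → NormalForm lt v' → v' = v := by

  have hir : ∀ a, ¬ lt a a := fun a => irrefl a
  have htr : Transitive lt := fun _ _ _ h h' => _root_.trans h h'
  obtain ⟨v, hv1, hv2⟩ := NFProof.exists_nf hir htr (NFProof.inv lt u) u le_rfl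
  refine ⟨v, ⟨Relation.ReflTransGen.mono (fun _ _ h => NFProof.swap_of_red h) _ _ hv1, hv2⟩, ?_⟩
  intro v' hv' hnf'
  have hvv' : Equiv lt v v' :=
    (NFProof.equiv_symm (Relation.ReflTransGen.mono (fun _ _ h => NFProof.swap_of_red h) _ _ hv1)).trans hv'
  obtain ⟨z, hz1, hz2⟩ := NFProof.join_of_equiv hir htr hvv'
  rw [← NFProof.nf_stop hnf' hz2, ← NFProof.nf_stop hv2 hz1]
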